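/- The n-th root of the (n − ⌊√n⌋)-th Motzkin number converges to 3; i.e. Filter.Tendsto (fun n : ℕ => ((∑ t in Finset.range (n - Nat.sqrt n + 1), (n - Nat.sqrt n).choose (2*t) * catalan t : ℕ) : ℝ) ^ ((n : ℝ)⁻¹)) Filter.atTop (nhds 3). -/

import Mathlib

open Finset Filter Real

namespace MotzkinAux

def Motz (m : ℕ) : ℕ := ∑ t ∈ range (m + 1), m.choose (2 * t) * catalan t

lemma sum_range_double (a : ℕ → ℕ) (N : ℕ) :
    ∑ k ∈ range (2 * N), a k = ∑ t ∈ range N, (a (2 * t) + a (2 * t + 1)) := by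
  induction N with
  | zero => simp
  | succ n ih =>
      have h2 : 2 * (n + 1) = (2 * n + 1) + 1 := by ring
      rw [h2, sum_range_succ, sum_range_succ, ih, sum_range_succ]
      ring

lemma catalan_le_four_pow (t : ℕ) : catalan t ≤ 4 ^ t := by
  have h1 : catalan t ≤ (t + 1) * catalan t := Nat.le_mul_of_pos_left _ (Nat.succ_pos t)
  have h2 : (t + 1) * catalan t = t.centralBinom := succ_mul_catalan_eq_centralBinom t
  have h3 : t.centralBinom ≤ 2 ^ (2 * t) := by
    rw [← Nat.sum_range_choose (2 * t)]
    exact Finset.single_le_sum (f := fun k => (2 * t).choose k)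
      (fun _ _ => Nat.zero_le _) (Finset.mem_range.mpr (by omega))
  calc catalan t ≤ t.centralBinom := h2 ▸ h1
    _ ≤ 2 ^ (2 * t) := h3
    _ = 4 ^ t := by rw [pow_mul]; norm_num

lemma motz_le (m : ℕ) : Motz m ≤ 3 ^ m := by
  have step1 : Motz m ≤ ∑ t ∈ range (m + 1), m.choose (2 * t) * 2 ^ (2 * t) := by
    apply Finset.sum_le_sum
    intro t _
    have := catalan_le_four_pow t
    calc m.choose (2 * t) * catalan t ≤ m.choose (2 * t) * 4 ^ t :=
          Nat.mul_le_mul_left _ this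
      _ = m.choose (2 * t) * 2 ^ (2 * t) := by rw [pow_mul]; norm_num
  have step2 : ∑ t ∈ range (m + 1), m.choose (2 * t) * 2 ^ (2 * t)
      ≤ ∑ k ∈ range (2 * (m + 1)), m.choose k * 2 ^ k := by
    rw [sum_range_double (fun k => m.choose k * 2 ^ k)]
    exact Finset.sum_le_sum fun t _ => Nat.le_add_right _ _
  have step3 : ∑ k ∈ range (2 * (m + 1)), m.choose k * 2 ^ k
      = ∑ k ∈ range (m + 1), m.choose k * 2 ^ k := by
    symm
    apply Finset.sum_subset
    · apply Finset.range_subset_range.mpr; omega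
    · intro k _ hk
      rw [Finset.mem_range, not_lt] at hk
      rw [Nat.choose_eq_zero_of_lt (by omega), zero_mul]
  have step4 : ∑ k ∈ range (m + 1), m.choose k * 2 ^ k = 3 ^ m := by
    have := add_pow 2 1 m (R := ℕ)
    simp only [one_pow, mul_one] at this
    norm_num at this
    rw [this]
    exact Finset.sum_congr rfl fun k _ => by ring
  omega

lemma four_pow_le (t : ℕ) : 4 ^ t ≤ (2 * t + 1) * ((t + 1) * catalan t) := by
  rcases Nat.eq_zero_or_pos t with rfl | ht
  · simp
  · have h1 : 4 ^ t ≤ 2 * t * t.centralBinom :=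
      Nat.four_pow_le_two_mul_self_mul_centralBinom t ht
    have h2 : (t + 1) * catalan t = t.centralBinom := succ_mul_catalan_eq_centralBinom t
    rw [h2]
    calc 4 ^ t ≤ 2 * t * t.centralBinom := h1
      _ ≤ (2 * t + 1) * t.centralBinom := Nat.mul_le_mul_right _ (by omega)

lemma le_motz (m : ℕ) : 3 ^ m ≤ (2 * m + 1) ^ 2 * (m + 1) * Motz m := by
  set A : ℕ → ℕ := fun k => m.choose k * 2 ^ k with hA
  have odd_le : ∀ t, A (2 * t + 1) ≤ 2 * m * A (2 * t) := by
    intro t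
    have h := Nat.choose_succ_right_eq m (2 * t)
    have hle : m.choose (2 * t + 1) ≤ m * m.choose (2 * t) := by
      calc m.choose (2 * t + 1) ≤ m.choose (2 * t + 1) * (2 * t + 1) :=
            Nat.le_mul_of_pos_right _ (by omega)
        _ = m.choose (2 * t) * (m - 2 * t) := h
        _ ≤ m.choose (2 * t) * m := Nat.mul_le_mul_left _ (Nat.sub_le _ _)
        _ = m * m.choose (2 * t) := mul_comm _ _
    calc A (2 * t + 1) = m.choose (2 * t + 1) * (2 ^ (2 * t) * 2) := by
          rw [hA]; simp [pow_succ]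
      _ ≤ m * m.choose (2 * t) * (2 ^ (2 * t) * 2) := Nat.mul_le_mul_right _ hle
      _ = 2 * m * A (2 * t) := by rw [hA]; ring
  have step1 : 3 ^ m = ∑ k ∈ range (m + 1), A k := by
    have := add_pow 2 1 m (R := ℕ)
    simp only [one_pow, mul_one] at this
    norm_num at this
    rw [this]
    apply Finset.sum_congr rfl
    intro k _
    rw [hA]; ring
  have step2 : ∑ k ∈ range (m + 1), A k ≤ ∑ k ∈ range (2 * (m + 1)), A k :=
    Finset.sum_le_sum_of_subset (Finset.range_subset_range.mpr (by omega))
  have step3 : ∑ k ∈ range (2 * (m + 1)), A k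
      ≤ (2 * m + 1) * ∑ t ∈ range (m + 1), A (2 * t) := by
    rw [sum_range_double A, Finset.mul_sum]
    apply Finset.sum_le_sum
    intro t _
    have := odd_le t
    nlinarith [odd_le t]
  have step4 : ∑ t ∈ range (m + 1), A (2 * t)
      ≤ (2 * m + 1) * (m + 1) * Motz m := by
    rw [Motz, Finset.mul_sum]
    apply Finset.sum_le_sum
    intro t ht
    rw [Finset.mem_range] at ht
    have h4 : 4 ^ t ≤ (2 * t + 1) * ((t + 1) * catalan t) := four_pow_le t
    have hmono : (2 * t + 1) * ((t + 1) * catalan t)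
        ≤ (2 * m + 1) * ((m + 1) * catalan t) := by
      have htm : t ≤ m := by omega
      exact Nat.mul_le_mul (by omega) (Nat.mul_le_mul_right _ (by omega))
    calc A (2 * t) = m.choose (2 * t) * 4 ^ t := by
          rw [hA]; simp only [pow_mul]; norm_num
      _ ≤ m.choose (2 * t) * ((2 * m + 1) * ((m + 1) * catalan t)) :=
          Nat.mul_le_mul_left _ (le_trans h4 hmono)
      _ = (2 * m + 1) * (m + 1) * (m.choose (2 * t) * catalan t) := by ring
  calc 3 ^ m = ∑ k ∈ range (m + 1), A k := step1
    _ ≤ ∑ k ∈ range (2 * (m + 1)), A k := step2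
    _ ≤ (2 * m + 1) * ∑ t ∈ range (m + 1), A (2 * t) := step3
    _ ≤ (2 * m + 1) * ((2 * m + 1) * (m + 1) * Motz m) :=
        Nat.mul_le_mul_left _ step4
    _ = (2 * m + 1) ^ 2 * (m + 1) * Motz m := by ring

lemma motz_pos (m : ℕ) : 0 < Motz m := by
  have : m.choose (2 * 0) * catalan 0 ≤ Motz m :=
    Finset.single_le_sum (f := fun t => m.choose (2 * t) * catalan t)
      (fun _ _ => Nat.zero_le _) (Finset.mem_range.mpr (Nat.succ_pos m))
  simpa using lt_of_lt_of_le (by norm_num) this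


-- limits toolbox
lemma inv_sqrt_tendsto : Tendsto (fun n : ℕ => 1 / Real.sqrt n) atTop (nhds 0) := by
  have h := (tendsto_one_div_atTop_nhds_zero_nat).sqrt
  rw [Real.sqrt_zero] at h
  apply h.congr
  intro n
  rw [one_div, Real.sqrt_inv, one_div]

lemma nat_sqrt_div_tendsto : Tendsto (fun n : ℕ => (Nat.sqrt n : ℝ) / n) atTop (nhds 0) := by
  apply tendsto_of_tendsto_of_tendsto_of_le_of_le' tendsto_const_nhds inv_sqrt_tendsto
  · exact Eventually.of_forall fun n => by positivity
  · filter_upwards [eventually_ge_atTop 1] with n hn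
    have hn0 : (0 : ℝ) < n := by exact_mod_cast hn
    calc (Nat.sqrt n : ℝ) / n ≤ Real.sqrt n / n :=
          div_le_div_of_nonneg_right Real.nat_sqrt_le_real_sqrt hn0.le
      _ = 1 / Real.sqrt n := Real.sqrt_div_self'
  -- NOTE: check div_le_div name

lemma m_div_tendsto : Tendsto (fun n : ℕ => ((n - Nat.sqrt n : ℕ) : ℝ) / n) atTop (nhds 1) := by
  have h : Tendsto (fun n : ℕ => 1 - (Nat.sqrt n : ℝ) / n) atTop (nhds 1) := by
    have := tendsto_const_nhds (x := (1:ℝ)) (f := atTop (α := ℕ)) |>.sub nat_sqrt_div_tendsto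
    simpa using this
  apply h.congr'
  filter_upwards [eventually_ge_atTop 1] with n hn
  have hn0 : (n : ℝ) ≠ 0 := by positivity
  rw [Nat.cast_sub (Nat.sqrt_le_self n)]
  field_simp

lemma log_div_x : Tendsto (fun x : ℝ => Real.log x / x) atTop (nhds 0) :=
  Real.isLittleO_log_id_atTop.tendsto_div_nhds_zero

lemma log_lin_div_tendsto : Tendsto (fun n : ℕ => Real.log (3 * ((n : ℝ) + 1)) / n) atTop (nhds 0) := by
  have ht : Tendsto (fun n : ℕ => 3 * ((n : ℝ) + 1)) atTop atTop := by
    apply Tendsto.const_mul_atTop (by norm_num : (0:ℝ) < 3)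
    exact tendsto_atTop_add_const_right _ 1 tendsto_natCast_atTop_atTop
  have h1 : Tendsto (fun n : ℕ => Real.log (3 * ((n:ℝ) + 1)) / (3 * ((n:ℝ) + 1))) atTop (nhds 0) :=
    log_div_x.comp ht
  have h2 : Tendsto (fun n : ℕ => 3 * ((n:ℝ) + 1) / n) atTop (nhds 3) := by
    have := (tendsto_const_nhds (x := (3:ℝ)) (f := atTop (α := ℕ))).add
      (tendsto_one_div_atTop_nhds_zero_nat.const_mul 3)
    norm_num at this
    apply this.congr'
    filter_upwards [eventually_ge_atTop 1] with n hn
    have hn0 : (n : ℝ) ≠ 0 := by positivity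
    field_simp
  have h3 := h1.mul h2
  rw [zero_mul] at h3
  apply h3.congr
  intro n
  have hb : (3 : ℝ) * ((n:ℝ) + 1) ≠ 0 := by positivity
  rw [div_mul_div_comm, mul_comm (Real.log _), mul_div_mul_left _ _ hb]


noncomputable def Dd (m : ℕ) : ℕ := (2 * m + 1) ^ 2 * (m + 1)

lemma Dd_pos (m : ℕ) : 0 < Dd m := by unfold Dd; positivity

lemma Dd_le (n : ℕ) : (Dd (n - Nat.sqrt n) : ℝ) ≤ (3 * ((n : ℝ) + 1)) ^ 3 := by
  have hm : n - Nat.sqrt n ≤ n := Nat.sub_le _ _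
  have : Dd (n - Nat.sqrt n) ≤ (3 * (n + 1)) ^ 3 := by
    unfold Dd
    set m := n - Nat.sqrt n
    calc (2 * m + 1) ^ 2 * (m + 1) ≤ (3 * (n + 1)) ^ 2 * (3 * (n + 1)) := by
          apply Nat.mul_le_mul
          · exact Nat.pow_le_pow_left (by omega) 2
          · omega
      _ = (3 * (n + 1)) ^ 3 := by ring
  calc (Dd (n - Nat.sqrt n) : ℝ) ≤ ((3 * (n + 1) : ℕ) : ℝ) ^ 3 := by exact_mod_cast this
    _ = (3 * ((n : ℝ) + 1)) ^ 3 := by push_cast; ring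

lemma logD_tendsto :
    Tendsto (fun n : ℕ => Real.log (Dd (n - Nat.sqrt n)) / n) atTop (nhds 0) := by
  have hg : Tendsto (fun n : ℕ => 3 * (Real.log (3 * ((n : ℝ) + 1)) / n)) atTop (nhds 0) := by
    have := log_lin_div_tendsto.const_mul (3 : ℝ)
    simpa using this
  apply tendsto_of_tendsto_of_tendsto_of_le_of_le' tendsto_const_nhds hg
  · apply Eventually.of_forall
    intro n
    have h1 : (1 : ℝ) ≤ (Dd (n - Nat.sqrt n) : ℝ) := by exact_mod_cast Dd_pos _
    positivity
  · filter_upwards [eventually_ge_atTop 1] with n hn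
    have hn0 : (0 : ℝ) < n := by exact_mod_cast hn
    have hD1 : (1 : ℝ) ≤ (Dd (n - Nat.sqrt n) : ℝ) := by exact_mod_cast Dd_pos _
    have hlog : Real.log (Dd (n - Nat.sqrt n)) ≤ 3 * Real.log (3 * ((n : ℝ) + 1)) := by
      calc Real.log (Dd (n - Nat.sqrt n)) ≤ Real.log ((3 * ((n : ℝ) + 1)) ^ 3) :=
            Real.log_le_log (by linarith) (Dd_le n)
        _ = 3 * Real.log (3 * ((n : ℝ) + 1)) := by
            rw [Real.log_pow]; push_cast; ring
    calc Real.log (Dd (n - Nat.sqrt n)) / n ≤ 3 * Real.log (3 * ((n : ℝ) + 1)) / n :=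
          div_le_div_of_nonneg_right hlog hn0.le
      _ = 3 * (Real.log (3 * ((n : ℝ) + 1)) / n) := by ring

lemma logMotz_tendsto :
    Tendsto (fun n : ℕ => Real.log (Motz (n - Nat.sqrt n)) / n) atTop (nhds (Real.log 3)) := by
  have hu : Tendsto (fun n : ℕ => ((n - Nat.sqrt n : ℕ) : ℝ) * Real.log 3 / n) atTop
      (nhds (Real.log 3)) := by
    have := m_div_tendsto.mul_const (Real.log 3)
    rw [one_mul] at this
    exact this.congr fun n => by ring
  have hl : Tendsto (fun n : ℕ =>
      ((n - Nat.sqrt n : ℕ) : ℝ) * Real.log 3 / n - Real.log (Dd (n - Nat.sqrt n)) / n)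
      atTop (nhds (Real.log 3)) := by
    have := hu.sub logD_tendsto
    rwa [sub_zero] at this
  apply tendsto_of_tendsto_of_tendsto_of_le_of_le' hl hu
  · filter_upwards [eventually_ge_atTop 1] with n hn
    set m := n - Nat.sqrt n
    have hn0 : (0 : ℝ) < n := by exact_mod_cast hn
    have hMpos : (0 : ℝ) < (Motz m : ℝ) := by exact_mod_cast motz_pos m
    have hDpos : (0 : ℝ) < (Dd m : ℝ) := by exact_mod_cast Dd_pos m
    have hkey : ((m : ℝ)) * Real.log 3 ≤ Real.log (Dd m) + Real.log (Motz m) := by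
      have hcast : ((3 : ℝ)) ^ m ≤ (Dd m : ℝ) * (Motz m : ℝ) := by
        have := le_motz m
        have : (3 ^ m : ℕ) ≤ Dd m * Motz m := this
        exact_mod_cast this
      calc ((m : ℝ)) * Real.log 3 = Real.log ((3 : ℝ) ^ m) := by rw [Real.log_pow]
        _ ≤ Real.log ((Dd m : ℝ) * (Motz m : ℝ)) := Real.log_le_log (by positivity) hcast
        _ = Real.log (Dd m) + Real.log (Motz m) := Real.log_mul hDpos.ne' hMpos.ne'
    rw [div_sub_div_same, div_le_div_iff_of_pos_right hn0]
    linarith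
  · filter_upwards [eventually_ge_atTop 1] with n hn
    set m := n - Nat.sqrt n
    have hn0 : (0 : ℝ) < n := by exact_mod_cast hn
    have hMpos : (0 : ℝ) < (Motz m : ℝ) := by exact_mod_cast motz_pos m
    have hcast : (Motz m : ℝ) ≤ (3 : ℝ) ^ m := by exact_mod_cast motz_le m
    have : Real.log (Motz m) ≤ (m : ℝ) * Real.log 3 := by
      calc Real.log (Motz m) ≤ Real.log ((3 : ℝ) ^ m) := Real.log_le_log hMpos hcast
        _ = (m : ℝ) * Real.log 3 := by rw [Real.log_pow]
    exact div_le_div_of_nonneg_right this hn0.le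

theorem main_final :
    Tendsto (fun n : ℕ => ((Motz (n - Nat.sqrt n) : ℕ) : ℝ) ^ ((n : ℝ)⁻¹)) atTop (nhds 3) := by
  have hexp : Tendsto (fun n : ℕ => Real.exp (Real.log (Motz (n - Nat.sqrt n)) / n)) atTop
      (nhds 3) := by
    have h := (Real.continuous_exp.tendsto (Real.log 3)).comp logMotz_tendsto
    rwa [Real.exp_log (by norm_num : (0:ℝ) < 3)] at h
  apply hexp.congr'
  filter_upwards [eventually_ge_atTop 1] with n hn
  have hMpos : (0 : ℝ) < (Motz (n - Nat.sqrt n) : ℝ) := by exact_mod_cast motz_pos _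
  rw [Real.rpow_def_of_pos hMpos, ← div_eq_mul_inv]

end MotzkinAux

open MotzkinAux in
/-- The n-th root of the (n − ⌊√n⌋)-th Motzkin number converges to 3. -/
theorem motzkin_truncated_root_tendsto_three :
    Filter.Tendsto
      (fun n : ℕ =>
        ((∑ t ∈ Finset.range (n - Nat.sqrt n + 1),
            (n - Nat.sqrt n).choose (2*t) * catalan t : ℕ) : ℝ) ^ ((n : ℝ)⁻¹))
      Filter.atTop (nhds 3) :=
  main_final
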